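/- A partial cube G isometrically embedded in Q_m has VC-dimension at most d if and only if G has no pc-minor isomorphic to the (d+1)-cube Q_{d+1}; in particular contracting a Θ-class never increases the VC-dimension. -/

import Mathlib

open Finset
open scoped Classical

variable {U : Type*}

/-- Hamming distance between two vertices of the hypercube `U → Bool`. -/
def hDist [Fintype U] [DecidableEq U] (x y : U → Bool) : ℕ :=
  (Finset.univ.filter fun i => x i ≠ y i).card

/-- The hypercube graph on `U → Bool`: two vertices are adjacent iff they differ
in exactly one coordinate. -/
def cubeGraph (U : Type*) [Fintype U] [DecidableEq U] : SimpleGraph (U → Bool) where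
  Adj x y := hDist x y = 1
  symm := by
    constructor
    intro x y h
    have hs : (Finset.univ.filter fun i => y i ≠ x i) =
        (Finset.univ.filter fun i => x i ≠ y i) := by
      apply Finset.filter_congr
      intro i _
      exact ne_comm
    simpa [hDist, hs] using h
  loopless := by
    constructor
    intro x h
    simp [hDist] at h

/-- Distance between `x` and `y` inside the subgraph of the hypercube induced by `A`
(`0` if one of them is not in `A`). -/
noncomputable def dIn [Fintype U] [DecidableEq U] (A : Set (U → Bool)) (x y : U → Bool) : ℕ :=
  if h : x ∈ A ∧ y ∈ A then ((cubeGraph U).induce A).dist ⟨x, h.1⟩ ⟨y, h.2⟩ else 0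

/-- A set of vertices of the hypercube is a partial cube if its induced graph is connected
and the induced graph distance coincides with the Hamming distance
(i.e. it is an isometric subgraph of the hypercube). -/
def IsPartialCube [Fintype U] [DecidableEq U] (A : Set (U → Bool)) : Prop :=
  ((cubeGraph U).induce A).Connected ∧ ∀ x ∈ A, ∀ y ∈ A, dIn A x y = hDist x y

/-- `A` shatters the coordinate set `X`. -/
def Shatters [Fintype U] [DecidableEq U] (A : Set (U → Bool)) (X : Finset U) : Prop :=
  ∀ g : U → Bool, ∃ a ∈ A, ∀ i ∈ X, a i = g i

/-- `A` strongly shatters `X`: it contains a full subcube over the coordinates `X`. -/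
def StronglyShatters [Fintype U] [DecidableEq U] (A : Set (U → Bool)) (X : Finset U) : Prop :=
  ∃ a : U → Bool, ∀ g : U → Bool, (fun i => if i ∈ X then g i else a i) ∈ A

/-- An ample set family: every shattered set is strongly shattered. -/
def IsAmple [Fintype U] [DecidableEq U] (A : Set (U → Bool)) : Prop :=
  ∀ X : Finset U, Shatters A X → StronglyShatters A X

/-- The pc-minor relation: `PCMinor S T` holds if `T` is obtained from `S` by a sequence of
restrictions to halfspaces and contractions of Θ-classes (a coordinate is contracted by
setting it to `false`). -/
inductive PCMinor {U : Type*} [DecidableEq U] : Set (U → Bool) → Set (U → Bool) → Prop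
  | refl (S : Set (U → Bool)) : PCMinor S S
  | restrict (S : Set (U → Bool)) (i : U) (b : Bool) (T : Set (U → Bool)) :
      PCMinor (S ∩ {f | f i = b}) T → PCMinor S T
  | contract (S : Set (U → Bool)) (i : U) (T : Set (U → Bool)) :
      PCMinor ((fun f => Function.update f i false) '' S) T → PCMinor S T

/-- `T` is a full subcube of dimension `k`. -/
def IsSubcube {U : Type*} [DecidableEq U] (T : Set (U → Bool)) (k : ℕ) : Prop :=
  ∃ (X : Finset U) (b : U → Bool), X.card = k ∧ T = {f | ∀ i ∉ X, f i = b i}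

lemma shatters_mono [Fintype U] [DecidableEq U] {A B : Set (U → Bool)} {X : Finset U}
    (hAB : A ⊆ B) (h : Shatters A X) : Shatters B X := by
  intro g
  obtain ⟨a, ha, hag⟩ := h g
  exact ⟨a, hAB ha, hag⟩

lemma shatters_contract [Fintype U] [DecidableEq U] {S : Set (U → Bool)} {i : U} {X : Finset U}
    (h : Shatters ((fun f => Function.update f i false) '' S) X) : Shatters S X := by
  by_cases hi : i ∈ X
  · exfalso
    obtain ⟨a, ⟨b, _, rfl⟩, hag⟩ := h (fun _ => true)
    have := hag i hi
    simp [Function.update] at this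
  · intro g
    obtain ⟨a, ⟨b, hb, rfl⟩, hag⟩ := h g
    refine ⟨b, hb, fun j hj => ?_⟩
    have hji : j ≠ i := fun hji => hi (hji ▸ hj)
    have := hag j hj
    simpa [Function.update, hji] using this

lemma pcminor_shatters [Fintype U] [DecidableEq U] {S T : Set (U → Bool)}
    (h : PCMinor S T) : ∀ X : Finset U, Shatters T X → Shatters S X := by
  induction h with
  | refl S => exact fun X h => h
  | restrict S i b T _ ih =>
      exact fun X h => shatters_mono Set.inter_subset_left (ih X h)
  | contract S i T _ ih =>
      exact fun X h => shatters_contract (ih X h)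

/-- Zero out the coordinates in `l`. -/
def zeroL [DecidableEq U] (l : List U) (f : U → Bool) : U → Bool :=
  l.foldl (fun f i => Function.update f i false) f

lemma zeroL_eval [DecidableEq U] : ∀ (l : List U) (f : U → Bool) (i : U),
    zeroL l f i = if i ∈ l then false else f i := by
  intro l
  induction l with
  | nil => intro f i; simp [zeroL]
  | cons j l ih =>
      intro f i
      have : zeroL (j :: l) f = zeroL l (Function.update f j false) := rfl
      rw [this, ih]
      by_cases hil : i ∈ l
      · simp [hil]
      · by_cases hij : i = j
        · subst hij; simp [hil, Function.update]
        · simp [hil, hij, Function.update]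

lemma pcminor_zeroL [DecidableEq U] : ∀ (l : List U) (S : Set (U → Bool)),
    PCMinor S (zeroL l '' S) := by
  intro l
  induction l with
  | nil => intro S; have h0 : zeroL ([] : List U) = id := rfl; rw [h0, Set.image_id]; exact PCMinor.refl S
  | cons i l ih =>
      intro S
      apply PCMinor.contract S i
      have h : zeroL (i :: l) '' S
          = zeroL l '' ((fun f => Function.update f i false) '' S) := by
        rw [Set.image_image]
        rfl
      rw [h]
      exact ih _

/-- A partial cube has VC-dimension at most `d` if and only if it has no
pc-minor isomorphic to `Q_{d+1}`; in particular, contracting a Θ-class never increases the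
VC-dimension. -/
theorem stmt6 [Fintype U] [DecidableEq U] (S : Set (U → Bool)) (hpc : IsPartialCube S)
    (d : ℕ) :
    ((∀ X : Finset U, Shatters S X → X.card ≤ d) ↔
      ¬ ∃ T : Set (U → Bool), PCMinor S T ∧ IsSubcube T (d + 1)) ∧
    (∀ (i : U) (d' : ℕ), (∀ X : Finset U, Shatters S X → X.card ≤ d') →
      ∀ X : Finset U, Shatters ((fun f => Function.update f i false) '' S) X → X.card ≤ d') := by
  constructor
  · constructor
    · rintro hvc ⟨T, hminor, X, b, hcard, rfl⟩
      have hshat : Shatters {f : U → Bool | ∀ i ∉ X, f i = b i} X := by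
        intro g
        exact ⟨fun i => if i ∈ X then g i else b i,
          fun i hi => by simp [hi], fun i hi => by simp [hi]⟩
      have := hvc X (pcminor_shatters hminor X hshat)
      omega
    · intro hno X hX
      by_contra hcard
      push_neg at hcard
      obtain ⟨X', hX'X, hX'card⟩ := Finset.exists_subset_card_eq (show d + 1 ≤ X.card by omega)
      have hshat' : Shatters S X' := fun g => by
        obtain ⟨a, ha, hag⟩ := hX g
        exact ⟨a, ha, fun i hi => hag i (hX'X hi)⟩
      set l := (Finset.univ \ X').toList with hl
      have hmem : ∀ i : U, i ∈ l ↔ i ∉ X' := by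
        intro i
        simp [hl, Finset.mem_toList]
      refine hno ⟨zeroL l '' S, pcminor_zeroL l S, X', fun _ => false, hX'card, ?_⟩
      ext f
      constructor
      · rintro ⟨a, _, rfl⟩ i hi
        rw [zeroL_eval]
        simp [(hmem i).2 hi]
      · intro hf
        obtain ⟨a, ha, hag⟩ := hshat' f
        refine ⟨a, ha, ?_⟩
        funext i
        rw [zeroL_eval]
        by_cases hil : i ∈ l
        · simp [hil, (hf i ((hmem i).1 hil)).symm]
        · have hiX : i ∈ X' := by
            by_contra hiX
            exact hil ((hmem i).2 hiX)
          simp [hil, hag i hiX]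
  · intro i d' hvc X hX
    exact hvc X (shatters_contract hX)
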